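/- Let $V$ be a finite-dimensional real vector space and $\mathcal{C} \subseteq V$ a convex cone. Let $L \subseteq V$ be a linear subspace and $R = \mathbb{R}_{\geq 0} v$ a ray with $v \notin L$. Suppose $R' \subseteq V$ is an extremal ray of $\mathcal{C}$ (a one-dimensional face) with $\mathcal{C} \subseteq (L \cap \mathcal{C}) + R$, and suppose there is a linear functional $e \in V^*$ with $L \subseteq \ker(e)$, $e(v) < 0$, and $e < 0$ on $R' \setminus \{0\}$. Then $R' = R$. -/
import Mathlib


/-- uniqueness of the extremal ray, Proposition 2.5(7).
Let `𝒞 ⊆ V` be a convex cone, `L ⊆ V` a linear subspace and `R = ℝ₊v` a ray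
with `v ∉ L` and `R ⊆ 𝒞`. Let `R'` be an extremal ray of `𝒞` with
`𝒞 ⊆ (L ∩ 𝒞) + R`, and let `e ∈ V*` satisfy `e ≡ 0` on `L`, `e(v) < 0`, and
`e < 0` on `R' \ {0}`. Then `R' = R`. -/
theorem stmt13 (V : Type) [AddCommGroup V] [Module ℝ V]
    (C : Set V) (hconv : Convex ℝ C)
    (hcone : ∀ (t : ℝ) (x : V), 0 ≤ t → x ∈ C → t • x ∈ C)
    (L : Submodule ℝ V) (v : V) (hv : v ∉ L)
    (R : Set V) (hR : R = {w | ∃ t : ℝ, 0 ≤ t ∧ w = t • v}) (hRC : R ⊆ C)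
    (R' : Set V) (hR'C : R' ⊆ C)
    -- `R'` is a ray
    (hR'ray : ∃ v' : V, v' ≠ 0 ∧ R' = {w | ∃ t : ℝ, 0 ≤ t ∧ w = t • v'})
    -- `R'` is extremal in `𝒞`
    (hextremal : ∀ u w : V, u ∈ C → w ∈ C → u + w ∈ R' → u ∈ R' ∧ w ∈ R')
    -- `𝒞 ⊆ (L ∩ 𝒞) + R`
    (hsub : ∀ x ∈ C, ∃ l ∈ (L : Set V) ∩ C, ∃ r ∈ R, x = l + r)
    (e : V →ₗ[ℝ] ℝ)
    (hLker : ∀ l ∈ L, e l = 0) (hev : e v < 0)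
    (hR'neg : ∀ w ∈ R', w ≠ 0 → e w < 0) :
    R' = R := by
  obtain ⟨v', hv'0, hR'⟩ := hR'ray
  have hv'R' : v' ∈ R' := by rw [hR']; exact ⟨1, zero_le_one, (one_smul ℝ v').symm⟩
  have hev' : e v' < 0 := hR'neg v' hv'R' hv'0
  obtain ⟨l, ⟨hlL, hlC⟩, r, hrR, hdecomp⟩ := hsub v' (hR'C hv'R')
  obtain ⟨t, ht0, rfl⟩ := hR ▸ hrR
  have hel : e l = 0 := hLker l hlL
  have het : t * e v < 0 := by
    have : e v' = e l + t * e v := by simp [hdecomp, hel]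
    rw [hel, zero_add] at this; linarith [this ▸ hev']
  have htpos : 0 < t := by
    rcases lt_or_ge 0 t with h | h
    · exact h
    · exfalso; nlinarith
  have htvC : t • v ∈ C := hRC (hR ▸ ⟨t, ht0, rfl⟩)
  have hmem : l + t • v ∈ R' := hdecomp ▸ hv'R'
  obtain ⟨hlR', htvR'⟩ := hextremal l (t • v) hlC htvC hmem
  -- l must be 0
  obtain ⟨s, hs0, hls⟩ := hR' ▸ hlR'
  have hl0 : l = 0 := by
    rcases eq_or_lt_of_le hs0 with h | h
    · rw [hls, ← h, zero_smul]
    · exfalso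
      have : e l = s * e v' := by simp [hls]
      rw [hel] at this
      nlinarith
  have hveq : v' = t • v := by rw [hdecomp, hl0, zero_add]
  ext w
  rw [hR', hR]
  constructor
  · rintro ⟨s, hs0, rfl⟩
    exact ⟨s * t, mul_nonneg hs0 ht0, by rw [hveq, smul_smul]⟩
  · rintro ⟨s, hs0, rfl⟩
    exact ⟨s / t, div_nonneg hs0 ht0, by rw [hveq, smul_smul, div_mul_cancel₀ s htpos.ne']⟩
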